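/- For all positive integers r and m there exists n₀ = n₀(r,m) (and one may take n₀(r,m) = c·6^{rm} for some absolute constant c) such that for every n ≥ n₀ and every r-coloring of D(n), there is a monochromatic binary tree B(m) with m levels in D(n). -/

import Mathlib

/-- The line `L(I,C)` in `D(n) = {0,1}ⁿ × {0,1}ⁿ`: all pairs `(x, y)` with
`y i = 1 - x i` for `i ∈ I` and `x j = y j = C j` for `j ∉ I`. -/
def cubeLine (n : ℕ) (I : Finset (Fin n)) (C : Fin n → Bool) :
    Set ((Fin n → Bool) × (Fin n → Bool)) :=
  {p | (∀ i ∈ I, p.2 i = !p.1 i) ∧ ∀ i ∉ I, p.1 i = C i ∧ p.2 i = C i}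

/-- `T`, indexed by binary strings (lists of Booleans, the root being the empty
list, the node with address `s` at level `s.length` having children with addresses
`false :: s` and `true :: s`), is a binary tree `B(m)` with `m` levels in `D(n)`:
each node `(X, Y)` is joined to children of the form `(X', Y)` and `(X, Y')` (with
`X' ≠ X`, `Y' ≠ Y`), and for each `1 ≤ k ≤ m` all `2^k` points at level `k` lie on
a common line.  (For `m = 1` this is exactly a corner.) -/
def IsBinTree (n m : ℕ) (T : List Bool → (Fin n → Bool) × (Fin n → Bool)) : Prop :=
  (∀ s : List Bool, s.length < m →
      (T (false :: s)).2 = (T s).2 ∧ (T (false :: s)).1 ≠ (T s).1 ∧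
      (T (true :: s)).1 = (T s).1 ∧ (T (true :: s)).2 ≠ (T s).2) ∧
  (∀ k : ℕ, 1 ≤ k → k ≤ m → ∃ (I : Finset (Fin n)) (C : Fin n → Bool),
      ∀ s : List Bool, s.length = k → T s ∈ cubeLine n I C)



namespace MonoTree

variable {n : ℕ}

/-- Flip the coordinates in `S`. -/
def flp (S : Finset (Fin n)) (X : Fin n → Bool) : Fin n → Bool :=
  fun i => if i ∈ S then !(X i) else X i

lemma flp_mem {S : Finset (Fin n)} {X : Fin n → Bool} {i : Fin n} (h : i ∈ S) :
    flp S X i = !(X i) := if_pos h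

lemma flp_nmem {S : Finset (Fin n)} {X : Fin n → Bool} {i : Fin n} (h : i ∉ S) :
    flp S X i = X i := if_neg h

@[simp] lemma flp_empty (X : Fin n → Bool) : flp (∅ : Finset (Fin n)) X = X := by
  funext i; simp [flp]

lemma flp_union {S T : Finset (Fin n)} (h : Disjoint S T) (X : Fin n → Bool) :
    flp (S ∪ T) X = flp S (flp T X) := by
  funext i
  by_cases hS : i ∈ S
  · have hT : i ∉ T := fun hT => (Finset.disjoint_left.mp h hS hT)
    simp [flp, hS, hT]
  · by_cases hT : i ∈ T <;> simp [flp, hS, hT]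

/-- The point of `D(n)` with first coordinate `X`, second coordinate agreeing
with `X` on `V` and flipped off `V`. -/
def chart (V : Finset (Fin n)) (X : Fin n → Bool) : (Fin n → Bool) × (Fin n → Bool) :=
  (X, fun i => if i ∈ V then X i else !(X i))

@[simp] lemma chart_fst (V : Finset (Fin n)) (X : Fin n → Bool) : (chart V X).1 = X := rfl

lemma chart_snd_mem {V : Finset (Fin n)} {X : Fin n → Bool} {i : Fin n} (h : i ∈ V) :
    (chart V X).2 i = X i := if_pos h

lemma chart_snd_nmem {V : Finset (Fin n)} {X : Fin n → Bool} {i : Fin n} (h : i ∉ V) :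
    (chart V X).2 i = !(X i) := if_neg h

lemma exists_majority {α : Type*} [DecidableEq α] {r : ℕ} (hr : 0 < r)
    (D : Finset α) (f : α → Fin r) :
    ∃ γ : Fin r, D.card ≤ r * (D.filter (fun x => f x = γ)).card := by
  by_contra hcon
  push_neg at hcon
  have hsum : ∑ γ : Fin r, (D.filter (fun x => f x = γ)).card = D.card :=
    (Finset.card_eq_sum_card_fiberwise (fun x _ => Finset.mem_univ (f x))).symm
  have h1 : ∑ γ : Fin r, (r * (D.filter (fun x => f x = γ)).card + 1)
      ≤ ∑ _γ : Fin r, D.card := by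
    refine Finset.sum_le_sum ?_
    intro γ _
    exact Nat.succ_le_of_lt (hcon γ)
  rw [Finset.sum_add_distrib, ← Finset.mul_sum, hsum, Finset.sum_const, Finset.sum_const] at h1
  simp only [Finset.card_univ, Fintype.card_fin, smul_eq_mul, mul_one, mul_comm] at h1
  omega

lemma bool_ne (x y : Bool) (h : x ≠ y) : y = !x := by revert h; revert x y; decide

def proj (W : Finset (Fin n)) (X : Fin n → Bool) : Fin n → Bool :=
  fun i => if i ∈ W then false else X i

def pairsOf (A : Finset (Fin n → Bool)) (W : Finset (Fin n)) :
    Finset ((Fin n → Bool) × (Fin n → Bool)) :=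
  (A ×ˢ A).filter (fun p => ∀ i, i ∉ W → p.1 i = p.2 i)

lemma cs_nat {α : Type*} (s : Finset α) (f : α → ℕ) :
    (∑ i ∈ s, f i) ^ 2 ≤ s.card * ∑ i ∈ s, (f i) ^ 2 := by
  have h := sq_sum_le_card_mul_sum_sq (s := s) (f := fun i => (f i : ℤ))
  have h2 : ((∑ i ∈ s, f i : ℕ) : ℤ) ^ 2 ≤ ((s.card * ∑ i ∈ s, (f i) ^ 2 : ℕ) : ℤ) := by
    push_cast
    exact h
  exact_mod_cast h2

lemma biUnion_union_eq {α β : Type*} [DecidableEq α] [DecidableEq β]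
    (s t : Finset α) (f : α → Finset β) :
    (s ∪ t).biUnion f = s.biUnion f ∪ t.biUnion f := by
  ext x
  simp only [Finset.mem_biUnion, Finset.mem_union]
  constructor
  · rintro ⟨a, ha | ha, hx⟩
    · exact Or.inl ⟨a, ha, hx⟩
    · exact Or.inr ⟨a, ha, hx⟩
  · rintro (⟨a, ha, hx⟩ | ⟨a, ha, hx⟩)
    · exact ⟨a, Or.inl ha, hx⟩
    · exact ⟨a, Or.inr ha, hx⟩

lemma count1 (A : Finset (Fin n → Bool)) (W : Finset (Fin n)) :
    (pairsOf A W).card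
      = ∑ K ∈ W.powerset, (A.filter (fun a => flp K a ∈ A)).card := by
  rw [Finset.card_eq_sum_card_fiberwise
    (f := fun p => W.filter (fun i => p.1 i ≠ p.2 i))
    (t := W.powerset) (fun p _ => Finset.mem_coe.mpr (Finset.mem_powerset.mpr (Finset.filter_subset (fun i => p.1 i ≠ p.2 i) W)))]
  refine Finset.sum_congr rfl ?_
  intro K hK
  rw [Finset.mem_powerset] at hK
  -- bijection p ↦ p.1
  refine Finset.card_bij (fun p _ => p.1) ?_ ?_ ?_
  · -- maps to
    intro p hp
    rw [Finset.mem_filter] at hp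
    obtain ⟨hp1, hp2⟩ := hp
    rw [pairsOf, Finset.mem_filter, Finset.mem_product] at hp1
    obtain ⟨⟨ha1, ha2⟩, hoff⟩ := hp1
    have hsnd : p.2 = flp K p.1 := by
      funext i
      by_cases hiK : i ∈ K
      · rw [← hp2] at hiK
        rw [Finset.mem_filter] at hiK
        have := bool_ne _ _ hiK.2
        rw [this]
        rw [flp, if_pos]
        rw [← hp2]; exact Finset.mem_filter.mpr ⟨hiK.1, hiK.2⟩
      · have : flp K p.1 i = p.1 i := if_neg hiK
        rw [this]
        by_cases hiW : i ∈ W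
        · by_contra hne
          exact hiK (hp2 ▸ Finset.mem_filter.mpr ⟨hiW, fun h => hne h.symm⟩)
        · exact (hoff i hiW).symm
    rw [Finset.mem_filter]
    exact ⟨ha1, by rw [← hsnd]; exact ha2⟩
  · -- injective
    intro p hp q hq hpq
    rw [Finset.mem_filter] at hp hq
    have hsnd : ∀ z ∈ (pairsOf A W).filter
        (fun p => (W.filter fun i => p.1 i ≠ p.2 i) = K), z.2 = flp K z.1 := by
      intro z hz
      rw [Finset.mem_filter] at hz
      obtain ⟨hz1, hz2⟩ := hz
      rw [pairsOf, Finset.mem_filter, Finset.mem_product] at hz1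
      obtain ⟨⟨_, _⟩, hoff⟩ := hz1
      funext i
      by_cases hiK : i ∈ K
      · rw [← hz2, Finset.mem_filter] at hiK
        have := bool_ne _ _ hiK.2
        rw [this, flp, if_pos]
        rw [← hz2]; exact Finset.mem_filter.mpr hiK
      · have : flp K z.1 i = z.1 i := if_neg hiK
        rw [this]
        by_cases hiW : i ∈ W
        · by_contra hne
          exact hiK (hz2 ▸ Finset.mem_filter.mpr ⟨hiW, fun h => hne h.symm⟩)
        · exact (hoff i hiW).symm
    have h1 := hsnd p (Finset.mem_filter.mpr hp)
    have h2 := hsnd q (Finset.mem_filter.mpr hq)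
    have hpq' : p.1 = q.1 := hpq
    have : p.2 = q.2 := by rw [h1, h2, hpq']
    exact Prod.ext hpq' this
  · -- surjective
    intro a ha
    rw [Finset.mem_filter] at ha
    refine ⟨(a, flp K a), ?_, rfl⟩
    rw [Finset.mem_filter]
    constructor
    · rw [pairsOf, Finset.mem_filter, Finset.mem_product]
      refine ⟨⟨ha.1, ha.2⟩, ?_⟩
      intro i hiW
      have hiK : i ∉ K := fun h => hiW (hK h)
      exact (if_neg hiK).symm
    · apply Finset.ext
      intro i
      simp only [Finset.mem_filter]
      constructor
      · rintro ⟨hiW, hne⟩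
        by_contra hiK
        exact hne (if_neg hiK).symm
      · intro hiK
        refine ⟨hK hiK, ?_⟩
        rw [flp, if_pos hiK]
        simp

lemma count2 (A : Finset (Fin n → Bool)) (W : Finset (Fin n)) :
    (pairsOf A W).card
      = ∑ y ∈ A.image (proj W), ((A.filter (fun a => proj W a = y)).card) ^ 2 := by
  rw [Finset.card_eq_sum_card_fiberwise
    (f := fun p => proj W p.1) (t := A.image (proj W)) ?_]
  · refine Finset.sum_congr rfl ?_
    intro y _
    have hset : (pairsOf A W).filter (fun p => proj W p.1 = y)
        = (A.filter (fun a => proj W a = y)) ×ˢ (A.filter (fun a => proj W a = y)) := by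
      apply Finset.ext
      intro p
      rw [Finset.mem_filter, pairsOf, Finset.mem_filter, Finset.mem_product,
        Finset.mem_product, Finset.mem_filter, Finset.mem_filter]
      constructor
      · rintro ⟨⟨⟨h1, h2⟩, hoff⟩, hy⟩
        have hy2 : proj W p.2 = y := by
          rw [← hy]
          funext i
          by_cases hiW : i ∈ W
          · simp [proj, hiW]
          · simp [proj, hiW, (hoff i hiW).symm]
        exact ⟨⟨h1, hy⟩, ⟨h2, hy2⟩⟩
      · rintro ⟨⟨h1, hy1⟩, ⟨h2, hy2⟩⟩
        refine ⟨⟨⟨h1, h2⟩, ?_⟩, hy1⟩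
        intro i hiW
        have e1 : p.1 i = proj W p.1 i := by simp [proj, hiW]
        have e2 : p.2 i = proj W p.2 i := by simp [proj, hiW]
        rw [e1, e2, hy1, hy2]
    rw [hset, Finset.card_product, sq]
  · intro p hp
    rw [Finset.mem_coe, pairsOf, Finset.mem_filter, Finset.mem_product] at hp
    exact Finset.mem_coe.mpr (Finset.mem_image_of_mem _ hp.1.1)

lemma image_proj_card (A : Finset (Fin n → Bool)) (W : Finset (Fin n)) :
    (A.image (proj W)).card ≤ 2 ^ (n - W.card) := by
  classical
  have h1 : (A.image (proj W)).card ≤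
      Fintype.card ((↥(Wᶜ : Finset (Fin n))) → Bool) := by
    apply Finset.card_le_card_of_injOn (fun X => fun j => X j.1)
    · intro X _; exact Finset.mem_univ _
    · intro X hX Y hY hXY
      rw [Finset.mem_coe, Finset.mem_image] at hX hY
      obtain ⟨a, _, ha⟩ := hX
      obtain ⟨b, _, hb⟩ := hY
      funext i
      by_cases hiW : i ∈ W
      · rw [← ha, ← hb]; simp [proj, hiW]
      · have : i ∈ (Wᶜ : Finset (Fin n)) := Finset.mem_compl.mpr hiW
        exact congrFun hXY ⟨i, this⟩
  calc (A.image (proj W)).card ≤ _ := h1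
  _ = 2 ^ (n - W.card) := by
      rw [Fintype.card_fun]
      simp [Finset.card_compl]


lemma sq_card_le (A : Finset (Fin n → Bool)) (W : Finset (Fin n)) :
    A.card ^ 2 ≤ 2 ^ (n - W.card) * (pairsOf A W).card := by
  have hsum : ∑ y ∈ A.image (proj W), (A.filter (fun a => proj W a = y)).card = A.card :=
    (Finset.card_eq_sum_card_fiberwise (fun a ha => Finset.mem_image_of_mem _ ha)).symm
  calc A.card ^ 2 = (∑ y ∈ A.image (proj W), (A.filter (fun a => proj W a = y)).card) ^ 2 := by
        rw [hsum]
  _ ≤ (A.image (proj W)).card *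
        ∑ y ∈ A.image (proj W), ((A.filter (fun a => proj W a = y)).card) ^ 2 :=
      cs_nat _ _
  _ ≤ 2 ^ (n - W.card) * (pairsOf A W).card := by
      rw [← count2]
      exact Nat.mul_le_mul_right _ (image_proj_card A W)

lemma avg (A : Finset (Fin n → Bool)) (W : Finset (Fin n)) (hW : W.Nonempty) :
    ∃ K, K ⊆ W ∧ K.Nonempty ∧
      A.card ^ 2 ≤ 2 ^ (n - W.card) * A.card
        + 2 ^ n * (A.filter (fun a => flp K a ∈ A)).card := by
  classical
  have hwn : W.card ≤ n := by
    have := Finset.card_le_univ W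
    simpa using this
  let t : Finset (Fin n) → ℕ := fun K => (A.filter (fun a => flp K a ∈ A)).card
  have hempty : t ∅ = A.card := by
    show (A.filter (fun a => flp (∅ : Finset (Fin n)) a ∈ A)).card = A.card
    have : A.filter (fun a => flp (∅ : Finset (Fin n)) a ∈ A) = A := by
      apply Finset.filter_true_of_mem
      intro a ha
      have : flp (∅ : Finset (Fin n)) a = a := by funext i; simp [flp]
      rw [this]; exact ha
    rw [this]
  let E := W.powerset.erase ∅
  have hEne : E.Nonempty := by
    obtain ⟨x, hx⟩ := hW
    refine ⟨{x}, ?_⟩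
    rw [Finset.mem_erase]
    refine ⟨by simp, Finset.mem_powerset.mpr (Finset.singleton_subset_iff.mpr hx)⟩
  obtain ⟨K, hKE, hKmax⟩ := Finset.exists_max_image E t hEne
  have hKW : K ⊆ W := Finset.mem_powerset.mp (Finset.mem_of_mem_erase hKE)
  have hKne : K.Nonempty := Finset.nonempty_of_ne_empty (Finset.ne_of_mem_erase hKE)
  refine ⟨K, hKW, hKne, ?_⟩
  have hsplit : (pairsOf A W).card = A.card + ∑ L ∈ E, t L := by
    have h0 : (∅ : Finset (Fin n)) ∈ W.powerset :=
      Finset.mem_powerset.mpr (Finset.empty_subset W)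
    have := (Finset.add_sum_erase W.powerset t h0).symm
    rw [count1]
    show ∑ K ∈ W.powerset, t K = A.card + ∑ L ∈ E, t L
    rw [this, hempty]
  have hsumE : ∑ L ∈ E, t L ≤ 2 ^ W.card * t K := by
    calc ∑ L ∈ E, t L ≤ ∑ _L ∈ E, t K := Finset.sum_le_sum (fun L hL => hKmax L hL)
    _ = E.card * t K := by rw [Finset.sum_const, smul_eq_mul]
    _ ≤ 2 ^ W.card * t K := by
        apply Nat.mul_le_mul_right
        calc E.card ≤ W.powerset.card := Finset.card_le_card (Finset.erase_subset _ _)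
        _ = 2 ^ W.card := Finset.card_powerset W
  calc A.card ^ 2 ≤ 2 ^ (n - W.card) * (pairsOf A W).card := sq_card_le A W
  _ = 2 ^ (n - W.card) * A.card + 2 ^ (n - W.card) * ∑ L ∈ E, t L := by
      rw [hsplit, Nat.mul_add]
  _ ≤ 2 ^ (n - W.card) * A.card + 2 ^ (n - W.card) * (2 ^ W.card * t K) :=
      Nat.add_le_add_left (Nat.mul_le_mul_left _ hsumE) _
  _ ≤ 2 ^ (n - W.card) * A.card + 2 ^ n * t K := by
      apply Nat.add_le_add_left
      rw [← Nat.mul_assoc]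
      apply Nat.mul_le_mul_right
      rw [← Nat.pow_add]
      have : n - W.card + W.card = n := by omega
      rw [this]



lemma stages {r : ℕ} (hr : 0 < r) (χ : (Fin n → Bool) × (Fin n → Bool) → Fin r)
    (T s : ℕ) (hs0 : 0 < s) (hs : 2 * r ^ 2 ≤ 2 ^ s) (hn : s * 2 ^ T ≤ n) :
    ∃ (B : ℕ → Finset (Fin n)) (c : ℕ → Fin r) (D : Finset (Fin n → Bool)),
      (∀ u, u < T → (B u).Nonempty) ∧
      (∀ u v, u < v → v < T → Disjoint (B u) (B v)) ∧
      D.Nonempty ∧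
      (∀ X ∈ D, ∀ j, j < T → ∀ U, U ⊆ Finset.Ico j T →
        χ (chart ((Finset.range j).biUnion B) (flp (U.biUnion B) X)) = c j) := by
  classical
  -- the inductive construction
  have main : ∀ t, t ≤ T → ∃ (B : ℕ → Finset (Fin n)) (c : ℕ → Fin r)
      (D : Finset (Fin n → Bool)) (free : Finset (Fin n)),
      (∀ u, u < t → (B u).Nonempty) ∧
      (∀ u v, u < v → v < t → Disjoint (B u) (B v)) ∧
      (∀ u, u < t → Disjoint (B u) free) ∧
      (2 ^ n ≤ D.card * (2 * r ^ 2) ^ (2 ^ t - 1)) ∧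
      (s * 2 ^ T ≤ free.card + s * 2 ^ t) ∧
      (∀ X ∈ D, ∀ j, j < t → ∀ U, U ⊆ Finset.Ico j t →
        χ (chart ((Finset.range j).biUnion B) (flp (U.biUnion B) X)) = c j) := by
    intro t
    induction t with
    | zero =>
      intro _
      refine ⟨fun _ => ∅, fun _ => ⟨0, hr⟩, Finset.univ, Finset.univ, ?_, ?_, ?_, ?_, ?_, ?_⟩
      · intro u hu; omega
      · intro u v hu hv; omega
      · intro u hu; omega
      · have : (Finset.univ : Finset (Fin n → Bool)).card = 2 ^ n := by
          rw [Finset.card_univ]; simp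
        rw [this]; simp
      · have : (Finset.univ : Finset (Fin n)).card = n := by simp
        rw [this]
        have : s * 2 ^ 0 = s := by norm_num
        omega
      · intro X _ j hj; omega
    | succ t ih =>
      intro htT
      obtain ⟨B, c, D, free, hA1, hA2, hA3, hA4, hA5, hA6⟩ := ih (by omega)
      -- the chart for this stage
      set P : Finset (Fin n) := (Finset.range t).biUnion B with hP
      -- majority color
      obtain ⟨γ, hγ⟩ := exists_majority hr D (fun X => χ (chart P X))
      set A : Finset (Fin n → Bool) := D.filter (fun X => χ (chart P X) = γ) with hA
      -- window
      have hfw : s * 2 ^ t ≤ free.card := by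
        have h1 : s * 2 ^ (t + 1) ≤ s * 2 ^ T :=
          Nat.mul_le_mul_left s (Nat.pow_le_pow_right (by norm_num) htT)
        have h2 : s * 2 ^ (t + 1) = 2 * (s * 2 ^ t) := by ring
        omega
      obtain ⟨W, hWfree, hWcard⟩ := Finset.exists_subset_card_eq hfw
      have hWne : W.Nonempty := by
        rw [← Finset.card_pos, hWcard]
        positivity
      obtain ⟨K, hKW, hKne, havg⟩ := avg A W hWne
      set D' : Finset (Fin n → Bool) := A.filter (fun a => flp K a ∈ A) with hD'
      set B' : ℕ → Finset (Fin n) := Function.update B t K with hB'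
      set c' : ℕ → Fin r := Function.update c t γ with hc'
      have hB'eq : ∀ u, u ≠ t → B' u = B u := fun u hu => Function.update_of_ne hu _ _
      have hB't : B' t = K := Function.update_self _ _ _
      have hc'eq : ∀ u, u ≠ t → c' u = c u := fun u hu => Function.update_of_ne hu _ _
      have hc't : c' t = γ := Function.update_self _ _ _
      have hKfree : K ⊆ free := hKW.trans hWfree
      refine ⟨B', c', D', free \ W, ?_, ?_, ?_, ?_, ?_, ?_⟩
      · -- A1
        intro u hu
        by_cases h : u = t
        · rw [h, hB't]; exact hKne
        · rw [hB'eq u h]; exact hA1 u (by omega)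
      · -- A2
        intro u v huv hv
        by_cases h : v = t
        · have hu : u < t := by omega
          rw [h, hB't, hB'eq u (by omega)]
          exact (hA3 u hu).mono_right hKfree
        · rw [hB'eq v h, hB'eq u (by omega)]
          exact hA2 u v huv (by omega)
      · -- A3
        intro u hu
        by_cases h : u = t
        · rw [h, hB't]
          exact Finset.sdiff_disjoint.symm.mono_left hKW
        · rw [hB'eq u h]
          exact (hA3 u (by omega)).mono_right (Finset.sdiff_subset)
      · -- A4 : cardinality
        have hwn : W.card ≤ n := by
          have := Finset.card_le_univ W
          simpa using this
        set Et : ℕ := (2 * r ^ 2) ^ (2 ^ t - 1) with hEt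
        have h2tpos : 0 < 2 ^ t := Nat.pow_pos (by norm_num)
        have hrE : 2 ^ n ≤ A.card * (r * Et) := by
          calc 2 ^ n ≤ D.card * Et := hA4
          _ ≤ (r * A.card) * Et := Nat.mul_le_mul_right Et hγ
          _ = A.card * (r * Et) := by ring
        have h2w : 2 * r * Et ≤ 2 ^ W.card := by
          have hrr : 2 * r ≤ 2 * r ^ 2 := by nlinarith
          calc 2 * r * Et ≤ (2 * r ^ 2) * Et := Nat.mul_le_mul_right Et hrr
          _ = (2 * r ^ 2) ^ (1 + (2 ^ t - 1)) := by rw [pow_add, pow_one]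
          _ = (2 * r ^ 2) ^ (2 ^ t) := by congr 1; omega
          _ ≤ (2 ^ s) ^ (2 ^ t) := Nat.pow_le_pow_left hs _
          _ = 2 ^ (s * 2 ^ t) := by rw [← pow_mul]
          _ = 2 ^ W.card := by rw [hWcard]
        have hAlb : 2 * 2 ^ (n - W.card) ≤ A.card := by
          have hpos : 0 < r * Et := by positivity
          apply Nat.le_of_mul_le_mul_right _ hpos
          calc (2 * 2 ^ (n - W.card)) * (r * Et)
              = 2 ^ (n - W.card) * (2 * r * Et) := by ring
          _ ≤ 2 ^ (n - W.card) * 2 ^ W.card := Nat.mul_le_mul_left _ h2w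
          _ = 2 ^ n := by rw [← pow_add]; congr 1; omega
          _ ≤ A.card * (r * Et) := hrE
        have hA2n : A.card ^ 2 ≤ 2 ^ (n + 1) * D'.card := by
          have h5 : 2 * (2 ^ (n - W.card) * A.card) ≤ A.card ^ 2 := by
            calc 2 * (2 ^ (n - W.card) * A.card) = (2 * 2 ^ (n - W.card)) * A.card := by ring
            _ ≤ A.card * A.card := Nat.mul_le_mul_right A.card hAlb
            _ = A.card ^ 2 := (sq A.card).symm
          have h7 : A.card ^ 2 ≤ 2 * (2 ^ n * D'.card) := by linarith [havg]
          calc A.card ^ 2 ≤ 2 * (2 ^ n * D'.card) := h7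
          _ = 2 ^ (n + 1) * D'.card := by ring
        have hfinal : 2 ^ n * 2 ^ n ≤ 2 ^ n * (D'.card * (2 * r ^ 2) ^ (2 ^ (t + 1) - 1)) := by
          have hexp : 2 * r ^ 2 * Et ^ 2 = (2 * r ^ 2) ^ (2 ^ (t + 1) - 1) := by
            have he : 2 ^ (t + 1) - 1 = (2 ^ t - 1) * 2 + 1 := by
              rw [pow_succ]; omega
            rw [he, pow_add, pow_one, pow_mul, hEt]
            ring
          calc 2 ^ n * 2 ^ n ≤ (A.card * (r * Et)) * (A.card * (r * Et)) :=
            Nat.mul_le_mul hrE hrE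
          _ = (r ^ 2 * Et ^ 2) * A.card ^ 2 := by ring
          _ ≤ (r ^ 2 * Et ^ 2) * (2 ^ (n + 1) * D'.card) := Nat.mul_le_mul_left _ hA2n
          _ = 2 ^ n * (D'.card * (2 * r ^ 2 * Et ^ 2)) := by ring
          _ = 2 ^ n * (D'.card * (2 * r ^ 2) ^ (2 ^ (t + 1) - 1)) := by rw [hexp]
        exact Nat.le_of_mul_le_mul_left hfinal (Nat.pow_pos (by norm_num))
      · -- A5 : budget
        have hcard : (free \ W).card = free.card - W.card := Finset.card_sdiff_of_subset hWfree
        have h2 : s * 2 ^ (t + 1) = 2 * (s * 2 ^ t) := by ring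
        omega
      · -- A6 : invariant
        intro X hX j hj U hU
        have hXA : X ∈ A := Finset.mem_filter.mp hX |>.1
        have hXD : X ∈ D := Finset.mem_filter.mp hXA |>.1
        have hKXA : flp K X ∈ A := Finset.mem_filter.mp hX |>.2
        have hKXD : flp K X ∈ D := Finset.mem_filter.mp hKXA |>.1
        have hPj : ∀ j', j' ≤ t → (Finset.range j').biUnion B' = (Finset.range j').biUnion B := by
          intro j' hj'
          apply Finset.biUnion_congr rfl
          intro u hu
          rw [Finset.mem_range] at hu
          exact hB'eq u (by omega)
        by_cases hjt : j = t
        · -- j = t : U ⊆ {t}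
          subst hjt
          have hUsub : U ⊆ {j} := by
            intro x hx
            have := hU hx
            rw [Finset.mem_Ico] at this
            rw [Finset.mem_singleton]
            omega
          rw [hPj j le_rfl, hc't]
          rcases Finset.subset_singleton_iff.mp hUsub with h | h
          · subst h
            simp only [Finset.biUnion_empty, flp_empty]
            exact Finset.mem_filter.mp hXA |>.2
          · subst h
            rw [Finset.singleton_biUnion, hB't]
            exact Finset.mem_filter.mp hKXA |>.2
        · -- j < t
          have hjt' : j < t := by omega
          rw [hPj j (by omega), hc'eq j hjt]
          by_cases htU : t ∈ U
          · set U₀ := U.erase t with hU₀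
            have hU₀sub : U₀ ⊆ Finset.Ico j t := by
              intro x hx
              rw [hU₀, Finset.mem_erase] at hx
              have := hU hx.2
              rw [Finset.mem_Ico] at this ⊢
              have : x ≠ t := hx.1
              omega
            have hUeq : U = insert t U₀ := (Finset.insert_erase htU).symm
            have hU₀B : U₀.biUnion B' = U₀.biUnion B := by
              apply Finset.biUnion_congr rfl
              intro u hu
              have := hU₀sub hu
              rw [Finset.mem_Ico] at this
              exact hB'eq u (by omega)
            have hdisj : Disjoint (U₀.biUnion B) K := by
              rw [Finset.disjoint_biUnion_left]
              intro u hu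
              have := hU₀sub hu
              rw [Finset.mem_Ico] at this
              exact (hA3 u this.2).mono_right hKfree
            have hflip : flp (U.biUnion B') X = flp (U₀.biUnion B) (flp K X) := by
              rw [hUeq, Finset.biUnion_insert, hB't, hU₀B, Finset.union_comm,
                flp_union hdisj]
            rw [hflip]
            exact hA6 (flp K X) hKXD j hjt' U₀ hU₀sub
          · have hUsub : U ⊆ Finset.Ico j t := by
              intro x hx
              have := hU hx
              rw [Finset.mem_Ico] at this ⊢
              have : x ≠ t := by rintro rfl; exact htU hx
              omega
            have hUB : U.biUnion B' = U.biUnion B := by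
              apply Finset.biUnion_congr rfl
              intro u hu
              have := hUsub hu
              rw [Finset.mem_Ico] at this
              exact hB'eq u (by omega)
            rw [hUB]
            exact hA6 X hXD j hjt' U hUsub
  -- extract at t = T
  obtain ⟨B, c, D, free, hA1, hA2, hA3, hA4, hA5, hA6⟩ := main T le_rfl
  refine ⟨B, c, D, hA1, hA2, ?_, hA6⟩
  have hpos : 0 < D.card := by
    by_contra h
    push_neg at h
    have hD0 : D.card = 0 := by omega
    rw [hD0, zero_mul] at hA4
    have : 0 < 2 ^ n := Nat.pow_pos (by norm_num)
    omega
  exact Finset.card_pos.mp hpos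


lemma blocksDisj {B : ℕ → Finset (Fin n)} {T : ℕ}
    (hA2 : ∀ u v, u < v → v < T → Disjoint (B u) (B v))
    {U₁ U₂ : Finset ℕ} (h1 : ∀ u ∈ U₁, u < T) (h2 : ∀ v ∈ U₂, v < T)
    (hne : ∀ u ∈ U₁, ∀ v ∈ U₂, u ≠ v) :
    Disjoint (U₁.biUnion B) (U₂.biUnion B) := by
  rw [Finset.disjoint_biUnion_left]
  intro u hu
  rw [Finset.disjoint_biUnion_right]
  intro v hv
  rcases Nat.lt_or_ge u v with h | h
  · exact hA2 u v h (h2 v hv)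
  · have hvu : v < u := by have := hne u hu v hv; omega
    exact (hA2 v u hvu (h1 u hu)).symm

def maskArg (X0 : Fin n → Bool) (J : ℕ → Finset (Fin n)) : List Bool → (Fin n → Bool)
  | [] => X0
  | b :: s => if b then maskArg X0 J s else flp (J (s.length + 1)) (maskArg X0 J s)

@[simp] lemma maskArg_nil (X0 : Fin n → Bool) (J : ℕ → Finset (Fin n)) :
    maskArg X0 J [] = X0 := rfl

@[simp] lemma maskArg_true (X0 : Fin n → Bool) (J : ℕ → Finset (Fin n)) (s : List Bool) :
    maskArg X0 J (true :: s) = maskArg X0 J s := rfl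

@[simp] lemma maskArg_false (X0 : Fin n → Bool) (J : ℕ → Finset (Fin n)) (s : List Bool) :
    maskArg X0 J (false :: s) = flp (J (s.length + 1)) (maskArg X0 J s) := rfl


lemma three_pow_ge (r : ℕ) : r + 1 ≤ 3 ^ r := by
  induction r with
  | zero => norm_num
  | succ k ih =>
    have : 3 ^ (k + 1) = 3 * 3 ^ k := by ring
    omega

lemma sq_le_four_pow (r : ℕ) : r ^ 2 ≤ 4 ^ r := by
  induction r with
  | zero => norm_num
  | succ k ih =>
    have h4 : 4 ^ (k + 1) = 4 * 4 ^ k := by ring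
    have hk : k < 4 ^ k := Nat.lt_pow_self (by norm_num : 1 < 4)
    have hsq : (k + 1) ^ 2 = k ^ 2 + 2 * k + 1 := by ring
    omega
  



end MonoTree

open MonoTree

/-- For all positive `r` and `m` there is `n₀ = n₀(r, m)` (one may take
`n₀ = c * 6 ^ (r * m)` for an absolute constant `c`) such that for every `n ≥ n₀`,
every `r`-coloring of `D(n)` contains a monochromatic binary tree with `m` levels. -/
theorem monochromatic_binary_tree :
    ∃ c : ℕ, 0 < c ∧ ∀ r m : ℕ, 0 < r → 0 < m → ∀ n : ℕ, c * 6 ^ (r * m) ≤ n →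
      ∀ χ : (Fin n → Bool) × (Fin n → Bool) → Fin r,
        ∃ T : List Bool → (Fin n → Bool) × (Fin n → Bool),
          IsBinTree n m T ∧
          ∀ s : List Bool, s.length ≤ m → χ (T s) = χ (T []) := by
  refine ⟨16, by norm_num, ?_⟩
  intro r m hr hm n hn χ
  set s0 := 2 * r + 1 with hs0def
  set T0 := r * m + 1 with hT0def
  have hs : 2 * r ^ 2 ≤ 2 ^ s0 := by
    have h1 : r ^ 2 ≤ 4 ^ r := MonoTree.sq_le_four_pow r
    have h2 : (2:ℕ) ^ s0 = 2 * 4 ^ r := by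
      rw [hs0def, pow_succ, pow_mul]
      norm_num
      ring
    omega
  have h6 : (6:ℕ) ^ (r * m) = 2 ^ (r * m) * 3 ^ (r * m) := by
    rw [← Nat.mul_pow]
  have h3 : r + 1 ≤ 3 ^ r := MonoTree.three_pow_ge r
  have hrm : r ≤ r * m := Nat.le_mul_of_pos_right r hm
  have h3' : (3:ℕ) ^ r ≤ 3 ^ (r * m) := Nat.pow_le_pow_right (by norm_num) hrm
  have hT : (2:ℕ) ^ T0 = 2 * 2 ^ (r * m) := by
    rw [hT0def, pow_succ]; ring
  have key : s0 * 2 ^ T0 ≤ 16 * 6 ^ (r * m) := by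
    rw [hT, h6]
    have h42 : s0 * 2 ≤ 16 * 3 ^ (r * m) := by
      have hA : r + 1 ≤ 3 ^ (r * m) := le_trans h3 h3'
      have : s0 * 2 = 4 * r + 2 := by rw [hs0def]; ring
      omega
    calc s0 * (2 * 2 ^ (r * m)) = (s0 * 2) * 2 ^ (r * m) := by ring
    _ ≤ (16 * 3 ^ (r * m)) * 2 ^ (r * m) := Nat.mul_le_mul_right _ h42
    _ = 16 * (2 ^ (r * m) * 3 ^ (r * m)) := by ring
  have hbudget : s0 * 2 ^ T0 ≤ n := le_trans key hn
  obtain ⟨B, c, D, hA1, hA2, hDne, hA6⟩ :=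
    MonoTree.stages hr χ T0 s0 (by omega) hs hbudget
  -- pigeonhole on colors
  have hsum : ∑ γ : Fin r, ((Finset.range T0).filter (fun u => c u = γ)).card = T0 := by
    have h := Finset.card_eq_sum_card_fiberwise
      (s := Finset.range T0) (t := (Finset.univ : Finset (Fin r))) (f := c)
      (fun u _ => Finset.mem_univ (c u))
    rw [Finset.card_range] at h
    exact h.symm
  have hex : ∃ γ : Fin r, m + 1 ≤ ((Finset.range T0).filter (fun u => c u = γ)).card := by
    by_contra hcon
    push_neg at hcon
    have hle : ∑ γ : Fin r, ((Finset.range T0).filter (fun u => c u = γ)).card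
        ≤ ∑ _γ : Fin r, m := by
      refine Finset.sum_le_sum ?_
      intro γ _
      have := hcon γ
      omega
    rw [hsum, Finset.sum_const, Finset.card_univ, Fintype.card_fin, smul_eq_mul, hT0def] at hle
    omega
  obtain ⟨γ, hγcard⟩ := hex
  obtain ⟨S', hS'sub, hS'card⟩ := Finset.exists_subset_card_eq hγcard
  set τe := S'.orderEmbOfFin hS'card with hτe
  have hτmem : ∀ i : Fin (m+1), (τe i) ∈ (Finset.range T0).filter (fun u => c u = γ) :=
    fun i => hS'sub (S'.orderEmbOfFin_mem hS'card i)
  have hτT : ∀ i : Fin (m+1), (τe i : ℕ) < T0 := by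
    intro i
    have := hτmem i
    rw [Finset.mem_filter, Finset.mem_range] at this
    exact this.1
  have hτc : ∀ i : Fin (m+1), c (τe i) = γ := by
    intro i
    have := hτmem i
    rw [Finset.mem_filter] at this
    exact this.2
  have hτmono : StrictMono τe := OrderEmbedding.strictMono τe
  set σ : ℕ → ℕ := fun k => τe ⟨m - k, by omega⟩ with hσdef
  have hσT : ∀ k, σ k < T0 := fun k => hτT _
  have hσc : ∀ k, c (σ k) = γ := fun k => hτc _
  have hσanti : ∀ k k' : ℕ, k ≤ k' → σ k' ≤ σ k := by
    intro k k' h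
    apply hτmono.monotone
    show (⟨m - k', _⟩ : Fin (m+1)) ≤ ⟨m - k, _⟩
    rw [Fin.mk_le_mk]
    omega
  have hσstrict : ∀ k, k < m → σ (k+1) < σ k := by
    intro k hk
    apply hτmono
    show (⟨m - (k+1), _⟩ : Fin (m+1)) < ⟨m - k, _⟩
    rw [Fin.mk_lt_mk]
    omega
  set Voff : ℕ → Finset (Fin n) := fun k => (Finset.range (σ k)).biUnion B with hVoffdef
  set J : ℕ → Finset (Fin n) := fun j => (Finset.Ico (σ j) (σ (j-1))).biUnion B with hJdef
  obtain ⟨X0, hX0⟩ := hDne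
  -- representation of maskArg as a flip of a block union
  have hrep : ∀ s : List Bool, ∃ U : Finset ℕ, U ⊆ Finset.Ico (σ s.length) T0 ∧
      maskArg X0 J s = flp (U.biUnion B) X0 := by
    intro s
    induction s with
    | nil => exact ⟨∅, by simp, by simp⟩
    | cons b t iht =>
      obtain ⟨U, hUsub, hUrep⟩ := iht
      have hmonoIco : Finset.Ico (σ t.length) T0 ⊆ Finset.Ico (σ (t.length+1)) T0 :=
        Finset.Ico_subset_Ico (hσanti t.length (t.length+1) (by omega)) le_rfl
      cases b with
      | true =>
        refine ⟨U, hUsub.trans hmonoIco, ?_⟩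
        simpa using hUrep
      | false =>
        refine ⟨Finset.Ico (σ (t.length + 1)) (σ t.length) ∪ U, ?_, ?_⟩
        · apply Finset.union_subset
          · apply Finset.Ico_subset_Ico le_rfl
            have := hσT t.length
            omega
          · exact hUsub.trans hmonoIco
        · have hJeq : J (t.length + 1)
              = (Finset.Ico (σ (t.length+1)) (σ t.length)).biUnion B := by
            simp only [hJdef, Nat.add_sub_cancel]
          have hdisj : Disjoint ((Finset.Ico (σ (t.length+1)) (σ t.length)).biUnion B)
              (U.biUnion B) := by
            apply blocksDisj hA2
            · intro u hu
              rw [Finset.mem_Ico] at hu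
              have := hσT t.length
              omega
            · intro v hv
              have := hUsub hv
              rw [Finset.mem_Ico] at this
              omega
            · intro u hu v hv
              rw [Finset.mem_Ico] at hu
              have := hUsub hv
              rw [Finset.mem_Ico] at this
              omega
          rw [maskArg_false, hUrep, hJeq, biUnion_union_eq, flp_union hdisj]
  -- values of maskArg inside the offset region
  have hval : ∀ s : List Bool, ∀ i ∈ Voff s.length, maskArg X0 J s i = X0 i := by
    intro s i hi
    obtain ⟨U, hUsub, hUrep⟩ := hrep s
    rw [hUrep]
    apply flp_nmem
    intro hmem
    rw [Finset.mem_biUnion] at hmem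
    simp only [hVoffdef, Finset.mem_biUnion] at hi
    obtain ⟨v, hvU, hiv⟩ := hmem
    obtain ⟨u, hu, hiu⟩ := hi
    rw [Finset.mem_range] at hu
    have hvI := hUsub hvU
    rw [Finset.mem_Ico] at hvI
    have huv : u < v := by omega
    exact (Finset.disjoint_left.mp (hA2 u v huv hvI.2) hiu) hiv
  -- the color of every tree point is γ
  have hcol : ∀ s : List Bool, χ (chart (Voff s.length) (maskArg X0 J s)) = γ := by
    intro s
    obtain ⟨U, hUsub, hUrep⟩ := hrep s
    rw [hUrep]
    have := hA6 X0 hX0 (σ s.length) (hσT _) U hUsub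
    simp only [hVoffdef]
    rw [this]
    exact hσc _
  -- structural facts
  have hsplit : ∀ k : ℕ, Voff (k+1) ∪ J (k+1) = Voff k := by
    intro k
    simp only [hVoffdef, hJdef, Nat.add_sub_cancel]
    rw [← biUnion_union_eq]
    have hranges : Finset.range (σ (k+1)) ∪ Finset.Ico (σ (k+1)) (σ k)
        = Finset.range (σ k) := by
      rw [Finset.range_eq_Ico, Finset.range_eq_Ico]
      exact Finset.Ico_union_Ico_eq_Ico (Nat.zero_le _) (hσanti k (k+1) (by omega))
    rw [hranges]
  have hdisjVJ : ∀ k : ℕ, Disjoint (Voff (k+1)) (J (k+1)) := by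
    intro k
    simp only [hVoffdef, hJdef, Nat.add_sub_cancel]
    apply blocksDisj hA2
    · intro u hu
      rw [Finset.mem_range] at hu
      have := hσT (k+1)
      omega
    · intro v hv
      rw [Finset.mem_Ico] at hv
      have := hσT k
      omega
    · intro u hu v hv
      rw [Finset.mem_range] at hu
      rw [Finset.mem_Ico] at hv
      omega
  have hwitness : ∀ k : ℕ, k < m → ∃ i₀, i₀ ∈ J (k+1) := by
    intro k hk
    obtain ⟨i₀, hi₀⟩ := hA1 (σ (k+1)) (hσT (k+1))
    refine ⟨i₀, ?_⟩
    simp only [hJdef, Nat.add_sub_cancel, Finset.mem_biUnion]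
    exact ⟨σ (k+1), Finset.mem_Ico.mpr ⟨le_rfl, hσstrict k hk⟩, hi₀⟩
  -- the tree
  refine ⟨fun s => chart (Voff s.length) (maskArg X0 J s), ⟨?_, ?_⟩, ?_⟩
  · -- corner conditions
    intro s hsm
    have hJV : J (s.length + 1) ⊆ Voff s.length := by
      rw [← hsplit s.length]
      exact Finset.subset_union_right
    have hVV : Voff (s.length + 1) ⊆ Voff s.length := by
      rw [← hsplit s.length]
      exact Finset.subset_union_left
    obtain ⟨i₀, hi₀J⟩ := hwitness s.length hsm
    have hi₀V : i₀ ∈ Voff s.length := hJV hi₀J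
    have hi₀nV : i₀ ∉ Voff (s.length + 1) :=
      fun h => (Finset.disjoint_left.mp (hdisjVJ s.length) h) hi₀J
    refine ⟨?_, ?_, ?_, ?_⟩
    · -- false child second coordinate equal
      show (chart (Voff (s.length + 1)) (maskArg X0 J (false :: s))).2
          = (chart (Voff s.length) (maskArg X0 J s)).2
      funext i
      rw [maskArg_false]
      by_cases h1 : i ∈ Voff (s.length + 1)
      · have h2 : i ∉ J (s.length + 1) :=
          fun h => (Finset.disjoint_left.mp (hdisjVJ s.length) h1) h
        rw [chart_snd_mem h1, chart_snd_mem (hVV h1), flp_nmem h2]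
      · by_cases h2 : i ∈ J (s.length + 1)
        · rw [chart_snd_nmem h1, chart_snd_mem (hJV h2), flp_mem h2]
          simp
        · have h3 : i ∉ Voff s.length := by
            rw [← hsplit s.length, Finset.mem_union]
            push_neg
            exact ⟨h1, h2⟩
          rw [chart_snd_nmem h1, chart_snd_nmem h3, flp_nmem h2]
    · -- false child first coordinate different
      show (chart (Voff (s.length + 1)) (maskArg X0 J (false :: s))).1
          ≠ (chart (Voff s.length) (maskArg X0 J s)).1
      rw [chart_fst, chart_fst, maskArg_false]
      intro h
      have := congrFun h i₀
      rw [flp_mem hi₀J] at this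
      simp at this
    · -- true child first coordinate equal
      rfl
    · -- true child second coordinate different
      show (chart (Voff (s.length + 1)) (maskArg X0 J (true :: s))).2
          ≠ (chart (Voff s.length) (maskArg X0 J s)).2
      rw [maskArg_true]
      intro h
      have := congrFun h i₀
      rw [chart_snd_nmem hi₀nV, chart_snd_mem hi₀V] at this
      simp at this
  · -- lines
    intro k hk1 hkm
    refine ⟨Finset.univ \ Voff k, X0, ?_⟩
    intro s hsk
    constructor
    · intro i hi
      rw [Finset.mem_sdiff] at hi
      show (chart (Voff s.length) (maskArg X0 J s)).2 i
          = !((chart (Voff s.length) (maskArg X0 J s)).1 i)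
      rw [chart_fst, chart_snd_nmem (hsk ▸ hi.2)]
    · intro i hi
      have hiV : i ∈ Voff k := by
        by_contra h
        exact hi (Finset.mem_sdiff.mpr ⟨Finset.mem_univ i, h⟩)
      have hiV' : i ∈ Voff s.length := hsk ▸ hiV
      constructor
      · show (chart (Voff s.length) (maskArg X0 J s)).1 i = X0 i
        rw [chart_fst]
        exact hval s i hiV'
      · show (chart (Voff s.length) (maskArg X0 J s)).2 i = X0 i
        rw [chart_snd_mem hiV']
        exact hval s i hiV'
  · -- monochromatic
    intro s _
    rw [hcol s, hcol []]
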